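/- Let 1 = λ₀ < λ₁ < ... < λ_k (k ≥ 1) with real coefficients c₀,...,c_k satisfying ∑ c_j = 1 and ∑ c_j λ_j = 0, and positive allocation fractions π₀,...,π_k with ∑ π_j = 1. Let α ≠ 0, ν > 0, 0 ≤ q < 2, δ > 0 be reals. Let b₁, b₂, v : ℝ → ℝ be continuous on (0, ε₀] for some ε₀ > 0 and satisfy, as ε → 0⁺: b₁(ε) = α·ε + O(ε²), b₂(ε) = O(ε²), and v(ε) = ν·ε^q + O(ε^{q+δ}). Define Δ(ε,B) = (b₁(ε)² + v(ε)/B) − (b₂(ε)² + (1/B)·∑_{j=0}^k (c_j²/π_j)·v(λ_j ε)), and set K = ν·(∑_{j=0}^k c_j² λ_j^q / π_j − 1) and C = (K/α²)^{1/(2−q)}. Then K > 0, and for any fixed 0 < m < C < M: (i) for all sufficiently large B there exists a zero of Δ(·,B) in [m·B^{−1/(2−q)}, M·B^{−1/(2−q)}]; and (ii) every such zero ε satisfies ε·B^{1/(2−q)} → C as B → ∞. -/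

import Mathlib

open Finset Real Filter Topology

lemma aux_sum_sq_gt_one (k : ℕ) (lam c pi : ℕ → ℝ) (q : ℝ) (hq0 : 0 ≤ q)
    (hlam1 : ∀ j ≤ k, 1 ≤ lam j)
    (hc_sum : ∑ j ∈ range (k + 1), c j = 1)
    (hc_lam : ∑ j ∈ range (k + 1), c j * lam j = 0)
    (hpi_pos : ∀ j ≤ k, 0 < pi j)
    (hpi_sum : ∑ j ∈ range (k + 1), pi j = 1) :
    1 < ∑ j ∈ range (k + 1), c j ^ 2 * lam j ^ q / pi j := by
  have hmem : ∀ j ∈ range (k + 1), j ≤ k := fun j hj => Nat.lt_succ_iff.mp (mem_range.mp hj)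
  have hlampos : ∀ j ≤ k, (0:ℝ) < lam j := fun j hj => lt_of_lt_of_le one_pos (hlam1 j hj)
  set A0 := ∑ j ∈ range (k + 1), pi j * lam j ^ (-q) with hA0
  set A1 := ∑ j ∈ range (k + 1), pi j * lam j ^ (1 - q) with hA1
  set A2 := ∑ j ∈ range (k + 1), pi j * lam j ^ (2 - q) with hA2
  have hA1pos : 0 < A1 :=
    Finset.sum_pos (fun j hj => mul_pos (hpi_pos _ (hmem _ hj))
      (Real.rpow_pos_of_pos (hlampos _ (hmem _ hj)) _)) nonempty_range_add_one
  have hA2pos : 0 < A2 :=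
    Finset.sum_pos (fun j hj => mul_pos (hpi_pos _ (hmem _ hj))
      (Real.rpow_pos_of_pos (hlampos _ (hmem _ hj)) _)) nonempty_range_add_one
  have hA0le : A0 ≤ 1 := by
    rw [← hpi_sum]
    apply Finset.sum_le_sum
    intro j hj
    have h1 : lam j ^ (-q) ≤ 1 :=
      Real.rpow_le_one_of_one_le_of_nonpos (hlam1 j (hmem j hj)) (neg_nonpos.mpr hq0)
    calc pi j * lam j ^ (-q) ≤ pi j * 1 :=
          mul_le_mul_of_nonneg_left h1 (hpi_pos j (hmem j hj)).le
      _ = pi j := mul_one _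
  set b := -A1 / A2 with hb
  set F := fun j => c j * lam j ^ (q / 2) / Real.sqrt (pi j) with hF
  set H := fun j => (1 + b * lam j) * (lam j ^ (-(q / 2)) * Real.sqrt (pi j)) with hH
  have hsumFH : ∑ j ∈ range (k + 1), F j * H j = 1 := by
    have hFH : ∀ j ∈ range (k + 1), F j * H j = c j + b * (c j * lam j) := by
      intro j hj
      have hl := hlampos j (hmem j hj)
      have hp := hpi_pos j (hmem j hj)
      have hs : Real.sqrt (pi j) ≠ 0 := (Real.sqrt_pos.mpr hp).ne'
      have he : lam j ^ (q / 2) * lam j ^ (-(q / 2)) = 1 := by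
        rw [← Real.rpow_add hl]; simp
      have key : F j * H j = c j * (1 + b * lam j) *
          ((lam j ^ (q / 2) * lam j ^ (-(q / 2))) * (Real.sqrt (pi j) / Real.sqrt (pi j))) := by
        simp only [hF, hH]; ring
      rw [key, he, div_self hs]; ring
    rw [Finset.sum_congr rfl hFH, Finset.sum_add_distrib, ← Finset.mul_sum, hc_sum, hc_lam,
      mul_zero, add_zero]
  have hF2 : ∀ j ∈ range (k + 1), F j ^ 2 = c j ^ 2 * lam j ^ q / pi j := by
    intro j hj
    have hl := hlampos j (hmem j hj)
    have hp := hpi_pos j (hmem j hj)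
    have he : (lam j ^ (q / 2)) ^ 2 = lam j ^ q := by
      rw [← Real.rpow_natCast (lam j ^ (q / 2)) 2, ← Real.rpow_mul hl.le]
      norm_num
    simp only [hF]
    rw [div_pow, mul_pow, he, Real.sq_sqrt hp.le]
  have hH2 : ∀ j ∈ range (k + 1), H j ^ 2 =
      pi j * lam j ^ (-q) + 2 * b * (pi j * lam j ^ (1 - q)) + b ^ 2 * (pi j * lam j ^ (2 - q)) := by
    intro j hj
    have hl := hlampos j (hmem j hj)
    have hp := hpi_pos j (hmem j hj)
    have he : (lam j ^ (-(q / 2))) ^ 2 = lam j ^ (-q) := by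
      rw [← Real.rpow_natCast (lam j ^ (-(q / 2))) 2, ← Real.rpow_mul hl.le]
      norm_num
    have e1 : lam j ^ (1 - q) = lam j * lam j ^ (-q) := by
      rw [sub_eq_add_neg, Real.rpow_add hl, Real.rpow_one]
    have e2 : lam j ^ (2 - q) = lam j ^ 2 * lam j ^ (-q) := by
      rw [sub_eq_add_neg, Real.rpow_add hl]
      norm_num [Real.rpow_two]
    simp only [hH]
    rw [mul_pow, mul_pow, he, Real.sq_sqrt hp.le, e1, e2]
    ring
  have hCS := Finset.sum_mul_sq_le_sq_mul_sq (range (k+1)) F H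
  rw [hsumFH, Finset.sum_congr rfl hF2, Finset.sum_congr rfl hH2] at hCS
  have hsH : ∑ j ∈ range (k + 1),
      (pi j * lam j ^ (-q) + 2 * b * (pi j * lam j ^ (1 - q)) + b ^ 2 * (pi j * lam j ^ (2 - q)))
      = A0 - A1 ^ 2 / A2 := by
    rw [Finset.sum_add_distrib, Finset.sum_add_distrib, ← Finset.mul_sum, ← Finset.mul_sum,
      ← hA0, ← hA1, ← hA2, hb]
    field_simp
    ring
  rw [hsH] at hCS
  -- 1^2 ≤ S * (A0 - A1^2/A2), with A0 - A1^2/A2 < A0 ≤ 1 and S ≥ 0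
  have hFlt : A0 - A1 ^ 2 / A2 < 1 :=
    lt_of_lt_of_le (by nlinarith [div_pos (pow_pos hA1pos 2) hA2pos]) hA0le
  have hSnn : 0 ≤ ∑ j ∈ range (k + 1), c j ^ 2 * lam j ^ q / pi j := by
    apply Finset.sum_nonneg
    intro j hj
    exact div_nonneg (mul_nonneg (sq_nonneg _) (Real.rpow_nonneg (hlampos j (hmem j hj)).le _) ) (hpi_pos j (hmem j hj)).le
  by_contra hle
  push_neg at hle
  have hF0 : 0 < A0 - A1 ^ 2 / A2 := by nlinarith
  nlinarith

set_option maxHeartbeats 1200000 in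
/-- Finite-shot help-harm boundary for fixed Richardson ZNE: with linear
leading bias `b₁(ε) = α ε + O(ε²)`, higher-order mitigated bias
`b₂(ε) = O(ε²)`, and variance `v(ε) = ν ε^q + O(ε^{q+δ})` with `0 ≤ q < 2`,
the variance penalty constant `K = ν (∑ c_j² λ_j^q/π_j − 1)` is positive and
every zero of the MSE difference in the rescaled window satisfies
`ε B^{1/(2−q)} → C = (K/α²)^{1/(2−q)}`. -/
theorem richardson_help_harm_boundary
    (k : ℕ) (hk : 1 ≤ k) (lam c pi : ℕ → ℝ)
    (hlam0 : lam 0 = 1)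
    (hlam_mono : ∀ i j : ℕ, i < j → j ≤ k → lam i < lam j)
    (hc_sum : ∑ j ∈ Finset.range (k + 1), c j = 1)
    (hc_lam : ∑ j ∈ Finset.range (k + 1), c j * lam j = 0)
    (hpi_pos : ∀ j ≤ k, 0 < pi j)
    (hpi_sum : ∑ j ∈ Finset.range (k + 1), pi j = 1)
    (α ν q δ ε₀ : ℝ)
    (hα : α ≠ 0) (hν : 0 < ν) (hq0 : 0 ≤ q) (hq2 : q < 2) (hδ : 0 < δ)
    (hε₀ : 0 < ε₀)
    (b₁ b₂ v : ℝ → ℝ)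
    (hb₁cont : ContinuousOn b₁ (Set.Ioc 0 ε₀))
    (hb₂cont : ContinuousOn b₂ (Set.Ioc 0 ε₀))
    (hvcont : ContinuousOn v (Set.Ioc 0 ε₀))
    (hb₁ : ∃ δ₀ > (0 : ℝ), ∃ L > (0 : ℝ), ∀ ε : ℝ, 0 < ε → ε ≤ δ₀ →
      |b₁ ε - α * ε| ≤ L * ε ^ 2)
    (hb₂ : ∃ δ₀ > (0 : ℝ), ∃ L > (0 : ℝ), ∀ ε : ℝ, 0 < ε → ε ≤ δ₀ →
      |b₂ ε| ≤ L * ε ^ 2)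
    (hv : ∃ δ₀ > (0 : ℝ), ∃ L > (0 : ℝ), ∀ ε : ℝ, 0 < ε → ε ≤ δ₀ →
      |v ε - ν * ε ^ q| ≤ L * ε ^ (q + δ))
    (Δ : ℝ → ℝ → ℝ)
    (hΔ : ∀ ε B : ℝ, Δ ε B =
      ((b₁ ε) ^ 2 + v ε / B) -
      ((b₂ ε) ^ 2 + (1 / B) *
        ∑ j ∈ Finset.range (k + 1), (c j) ^ 2 / pi j * v (lam j * ε))) :
    0 < ν * ((∑ j ∈ Finset.range (k + 1), (c j) ^ 2 * (lam j) ^ q / pi j) - 1) ∧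
    ∀ m M : ℝ, 0 < m →
      m < ((ν * ((∑ j ∈ Finset.range (k + 1), (c j) ^ 2 * (lam j) ^ q / pi j) - 1))
            / α ^ 2) ^ (1 / (2 - q)) →
      ((ν * ((∑ j ∈ Finset.range (k + 1), (c j) ^ 2 * (lam j) ^ q / pi j) - 1))
            / α ^ 2) ^ (1 / (2 - q)) < M →
      ((∃ B₁ > (0 : ℝ), ∀ B ≥ B₁,
          ∃ ε ∈ Set.Icc (m * B ^ (-(1 / (2 - q)))) (M * B ^ (-(1 / (2 - q)))),
            Δ ε B = 0) ∧
       (∀ η' > (0 : ℝ), ∃ B₂ > (0 : ℝ), ∀ B ≥ B₂,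
          ∀ ε ∈ Set.Icc (m * B ^ (-(1 / (2 - q)))) (M * B ^ (-(1 / (2 - q)))),
            Δ ε B = 0 →
              |ε * B ^ (1 / (2 - q)) -
                ((ν * ((∑ j ∈ Finset.range (k + 1),
                    (c j) ^ 2 * (lam j) ^ q / pi j) - 1)) / α ^ 2) ^ (1 / (2 - q))|
                ≤ η')) := by
  have hmem : ∀ j ∈ range (k + 1), j ≤ k := fun j hj => Nat.lt_succ_iff.mp (mem_range.mp hj)
  have hlam1 : ∀ j ≤ k, 1 ≤ lam j := by
    intro j hj
    rcases Nat.eq_zero_or_pos j with h | h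
    · rw [h, hlam0]
    · exact (hlam0 ▸ hlam_mono 0 j h hj).le
  have hlampos : ∀ j ≤ k, (0:ℝ) < lam j := fun j hj => lt_of_lt_of_le one_pos (hlam1 j hj)
  have hlamk : ∀ j ≤ k, lam j ≤ lam k := by
    intro j hj
    rcases eq_or_lt_of_le hj with h | h
    · rw [h]
    · exact (hlam_mono j k h le_rfl).le
  have hlamk1 : (1:ℝ) < lam k := hlam0 ▸ hlam_mono 0 k hk le_rfl
  have hlamkpos : (0:ℝ) < lam k := lt_trans one_pos hlamk1
  set S := ∑ j ∈ range (k + 1), c j ^ 2 * lam j ^ q / pi j with hSdef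
  have hS : 1 < S := aux_sum_sq_gt_one k lam c pi q hq0 hlam1 hc_sum hc_lam hpi_pos hpi_sum
  set K := ν * (S - 1) with hKdef
  have hK : 0 < K := mul_pos hν (by linarith)
  refine ⟨hK, ?_⟩
  intro m M hm hmC hCM
  have h2q : (0:ℝ) < 2 - q := by linarith
  set r := 1 / (2 - q) with hrdef
  have hr : 0 < r := by rw [hrdef]; positivity
  have hr2 : r * (2 - q) = 1 := by rw [hrdef]; field_simp
  have hα2 : 0 < α ^ 2 := lt_of_le_of_ne (sq_nonneg α) (Ne.symm (pow_ne_zero 2 hα))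
  have hKα : 0 < K / α ^ 2 := div_pos hK hα2
  set C := (K / α ^ 2) ^ r with hCdef
  have hCpos : 0 < C := Real.rpow_pos_of_pos hKα r
  have hMpos : 0 < M := lt_trans hCpos hCM
  -- sign lemmas for g(t) = α² t² - K t^q
  have hCpow : C ^ ((2:ℝ) - q) = K / α ^ 2 := by
    rw [hCdef, ← Real.rpow_mul hKα.le, hr2, Real.rpow_one]
  have hgneg : ∀ t : ℝ, 0 < t → t < C → α ^ 2 * t ^ 2 - K * t ^ q < 0 := by
    intro t ht htC
    have h2 : t ^ ((2:ℝ) - q) < K / α ^ 2 := by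
      have := Real.rpow_lt_rpow ht.le htC h2q
      rwa [hCpow] at this
    have h3 : (0:ℝ) < t ^ q := Real.rpow_pos_of_pos ht q
    have h4 : (t:ℝ) ^ (2:ℕ) = t ^ q * t ^ ((2:ℝ) - q) := by
      rw [← Real.rpow_add ht, show q + ((2:ℝ) - q) = 2 by ring, Real.rpow_two]
    have h5 : α ^ 2 * t ^ ((2:ℝ) - q) < K := by
      rw [lt_div_iff₀ hα2] at h2; linarith [h2]
    nlinarith [h4, h5, h3]
  have hgpos : ∀ t : ℝ, 0 < t → C < t → 0 < α ^ 2 * t ^ 2 - K * t ^ q := by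
    intro t ht htC
    have h2 : K / α ^ 2 < t ^ ((2:ℝ) - q) := by
      have := Real.rpow_lt_rpow hCpos.le htC h2q
      rwa [hCpow] at this
    have h3 : (0:ℝ) < t ^ q := Real.rpow_pos_of_pos ht q
    have h4 : (t:ℝ) ^ (2:ℕ) = t ^ q * t ^ ((2:ℝ) - q) := by
      rw [← Real.rpow_add ht, show q + ((2:ℝ) - q) = 2 by ring, Real.rpow_two]
    have h5 : K < α ^ 2 * t ^ ((2:ℝ) - q) := by
      rw [div_lt_iff₀ hα2] at h2; linarith [h2]
    nlinarith [h4, h5, h3]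
  -- the approximation constants
  obtain ⟨da, hda, La, hLa, hB1e⟩ := hb₁
  obtain ⟨db, hdb, Lb, hLb, hB2e⟩ := hb₂
  obtain ⟨dc, hdc, Lc, hLc, hVe⟩ := hv
  set εs := min (min da db) (min (dc / lam k) (min (ε₀ / lam k) 1)) with hεsdef
  have hεspos : 0 < εs :=
    lt_min (lt_min hda hdb) (lt_min (div_pos hdc hlamkpos)
      (lt_min (div_pos hε₀ hlamkpos) one_pos))
  have hεs_da : εs ≤ da := le_trans (min_le_left _ _) (min_le_left _ _)
  have hεs_db : εs ≤ db := le_trans (min_le_left _ _) (min_le_right _ _)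
  have hεsmin2 : εs ≤ min (dc / lam k) (min (ε₀ / lam k) 1) := min_le_right _ _
  have hεs_dc : lam k * εs ≤ dc := by
    have h : εs ≤ dc / lam k := hεsmin2.trans (min_le_left _ _)
    calc lam k * εs ≤ lam k * (dc / lam k) :=
          mul_le_mul_of_nonneg_left h hlamkpos.le
      _ = dc := by field_simp
  have hεs_ε₀ : lam k * εs ≤ ε₀ := by
    have h : εs ≤ ε₀ / lam k := hεsmin2.trans ((min_le_right _ _).trans (min_le_left _ _))
    calc lam k * εs ≤ lam k * (ε₀ / lam k) :=
          mul_le_mul_of_nonneg_left h hlamkpos.le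
      _ = ε₀ := by field_simp
  have hεs1 : εs ≤ 1 :=
    hεsmin2.trans ((min_le_right _ _).trans (min_le_right _ _))
  have hεsε₀' : εs ≤ ε₀ := by
    calc εs = 1 * εs := (one_mul _).symm
      _ ≤ lam k * εs := mul_le_mul_of_nonneg_right hlamk1.le hεspos.le
      _ ≤ ε₀ := hεs_ε₀
  set C₁ := La * (La + 2 * |α|) + Lb ^ 2 with hC₁def
  set Csum := ∑ j ∈ range (k + 1), c j ^ 2 / pi j with hCsumdef
  have hCsumnn : 0 ≤ Csum := Finset.sum_nonneg fun j hj =>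
    div_nonneg (sq_nonneg _) (hpi_pos j (hmem j hj)).le
  set C₂ := Lc + Csum * (Lc * lam k ^ (q + δ)) with hC₂def
  have hC₁nn : 0 ≤ C₁ := by positivity
  have hC₂nn : 0 ≤ C₂ := by
    have : (0:ℝ) ≤ Lc * lam k ^ (q + δ) :=
      mul_nonneg hLc.le (Real.rpow_nonneg hlamkpos.le _)
    have := mul_nonneg hCsumnn this
    rw [hC₂def]; linarith [hLc]
  have approx : ∀ ε : ℝ, 0 < ε → ε ≤ εs → ∀ B : ℝ, 0 < B →
      |Δ ε B - (α ^ 2 * ε ^ 2 - K * ε ^ q / B)| ≤ C₁ * ε ^ 3 + C₂ * ε ^ (q + δ) / B := by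
    intro ε hε hεle B hB
    have hε1 : ε ≤ 1 := hεle.trans hεs1
    have he43 : ε ^ 4 ≤ ε ^ 3 := pow_le_pow_of_le_one hε.le hε1 (by norm_num)
    have e1 : |b₁ ε ^ 2 - α ^ 2 * ε ^ 2| ≤ La * (La + 2 * |α|) * ε ^ 3 := by
      have h := hB1e ε hε (hεle.trans hεs_da)
      have hfac : b₁ ε ^ 2 - α ^ 2 * ε ^ 2 = (b₁ ε - α * ε) * (b₁ ε - α * ε + 2 * (α * ε)) := by
        ring
      rw [hfac, abs_mul]
      have h2 : |b₁ ε - α * ε + 2 * (α * ε)| ≤ La * ε ^ 2 + 2 * (|α| * ε) := by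
        calc |b₁ ε - α * ε + 2 * (α * ε)| ≤ |b₁ ε - α * ε| + |2 * (α * ε)| := abs_add_le _ _
          _ = |b₁ ε - α * ε| + 2 * (|α| * ε) := by
              rw [abs_mul, abs_mul, abs_of_pos hε, abs_of_nonneg (by norm_num : (0:ℝ) ≤ 2)]
          _ ≤ La * ε ^ 2 + 2 * (|α| * ε) := add_le_add_left h _
      calc |b₁ ε - α * ε| * |b₁ ε - α * ε + 2 * (α * ε)|
          ≤ (La * ε ^ 2) * (La * ε ^ 2 + 2 * (|α| * ε)) := by
            apply mul_le_mul h h2 (abs_nonneg _)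
            positivity
        _ = La ^ 2 * ε ^ 4 + 2 * La * |α| * ε ^ 3 := by ring
        _ ≤ La ^ 2 * ε ^ 3 + 2 * La * |α| * ε ^ 3 :=
            add_le_add_left (mul_le_mul_of_nonneg_left he43 (sq_nonneg La)) _
        _ = La * (La + 2 * |α|) * ε ^ 3 := by ring
    have e2 : |b₂ ε ^ 2| ≤ Lb ^ 2 * ε ^ 3 := by
      have h := hB2e ε hε (hεle.trans hεs_db)
      have h1 : |b₂ ε ^ 2| = |b₂ ε| ^ 2 := abs_pow _ _
      have h2 : |b₂ ε| ^ 2 ≤ (Lb * ε ^ 2) ^ 2 := pow_le_pow_left₀ (abs_nonneg _) h 2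
      rw [h1]
      calc |b₂ ε| ^ 2 ≤ (Lb * ε ^ 2) ^ 2 := h2
        _ = Lb ^ 2 * ε ^ 4 := by ring
        _ ≤ Lb ^ 2 * ε ^ 3 := mul_le_mul_of_nonneg_left he43 (sq_nonneg Lb)
    have e3 : ∀ j ∈ range (k + 1), |v (lam j * ε) - ν * lam j ^ q * ε ^ q| ≤
        Lc * lam k ^ (q + δ) * ε ^ (q + δ) := by
      intro j hj
      have hjk := hmem j hj
      have hlj := hlampos j hjk
      have hx : 0 < lam j * ε := mul_pos hlj hε
      have hxle : lam j * ε ≤ dc :=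
        le_trans (mul_le_mul (hlamk j hjk) hεle hε.le hlamkpos.le) hεs_dc
      have h := hVe (lam j * ε) hx hxle
      have hm1 : (lam j * ε) ^ q = lam j ^ q * ε ^ q := Real.mul_rpow hlj.le hε.le
      have hm2 : (lam j * ε) ^ (q + δ) = lam j ^ (q + δ) * ε ^ (q + δ) :=
        Real.mul_rpow hlj.le hε.le
      have hm3 : lam j ^ (q + δ) ≤ lam k ^ (q + δ) :=
        Real.rpow_le_rpow hlj.le (hlamk j hjk) (by linarith)
      have hεq : (0:ℝ) ≤ ε ^ (q + δ) := (Real.rpow_pos_of_pos hε _).le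
      have harg : ν * lam j ^ q * ε ^ q = ν * (lam j * ε) ^ q := by rw [hm1]; ring
      calc |v (lam j * ε) - ν * lam j ^ q * ε ^ q|
          = |v (lam j * ε) - ν * (lam j * ε) ^ q| := by rw [harg]
        _ ≤ Lc * (lam j * ε) ^ (q + δ) := h
        _ = Lc * (lam j ^ (q + δ) * ε ^ (q + δ)) := by rw [hm2]
        _ ≤ Lc * (lam k ^ (q + δ) * ε ^ (q + δ)) :=
            mul_le_mul_of_nonneg_left (mul_le_mul_of_nonneg_right hm3 hεq) hLc.le
        _ = Lc * lam k ^ (q + δ) * ε ^ (q + δ) := by ring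
    have hεs_dc' : εs ≤ dc := by
      calc εs = 1 * εs := (one_mul _).symm
        _ ≤ lam k * εs := mul_le_mul_of_nonneg_right hlamk1.le hεspos.le
        _ ≤ dc := hεs_dc
    have e5 : |v ε - ν * ε ^ q| ≤ Lc * ε ^ (q + δ) := hVe ε hε (hεle.trans hεs_dc')
    have e6 : |∑ j ∈ range (k + 1), c j ^ 2 / pi j * (v (lam j * ε) - ν * lam j ^ q * ε ^ q)|
        ≤ Csum * (Lc * lam k ^ (q + δ)) * ε ^ (q + δ) := by
      calc |∑ j ∈ range (k + 1), c j ^ 2 / pi j * (v (lam j * ε) - ν * lam j ^ q * ε ^ q)|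
          ≤ ∑ j ∈ range (k + 1), |c j ^ 2 / pi j * (v (lam j * ε) - ν * lam j ^ q * ε ^ q)| :=
            Finset.abs_sum_le_sum_abs _ _
        _ ≤ ∑ j ∈ range (k + 1), c j ^ 2 / pi j * (Lc * lam k ^ (q + δ) * ε ^ (q + δ)) := by
            apply Finset.sum_le_sum
            intro j hj
            have hnn : (0:ℝ) ≤ c j ^ 2 / pi j :=
              div_nonneg (sq_nonneg _) (hpi_pos j (hmem j hj)).le
            rw [abs_mul, abs_of_nonneg hnn]
            exact mul_le_mul_of_nonneg_left (e3 j hj) hnn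
        _ = Csum * (Lc * lam k ^ (q + δ)) * ε ^ (q + δ) := by
            rw [hCsumdef, Finset.sum_mul, Finset.sum_mul]
            exact Finset.sum_congr rfl fun j hj => by ring
    have hδeq : Δ ε B - (α ^ 2 * ε ^ 2 - K * ε ^ q / B) =
        (b₁ ε ^ 2 - α ^ 2 * ε ^ 2) - b₂ ε ^ 2 +
        ((v ε - ν * ε ^ q) -
          ∑ j ∈ range (k + 1), c j ^ 2 / pi j * (v (lam j * ε) - ν * lam j ^ q * ε ^ q)) / B := by
      have hsum : ∑ j ∈ range (k + 1), c j ^ 2 / pi j * v (lam j * ε)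
          = (∑ j ∈ range (k + 1), c j ^ 2 / pi j * (v (lam j * ε) - ν * lam j ^ q * ε ^ q))
            + ν * ε ^ q * S := by
        rw [hSdef, Finset.mul_sum, ← Finset.sum_add_distrib]
        exact Finset.sum_congr rfl fun j hj => by ring
      rw [hΔ, hsum, hKdef]
      generalize (∑ j ∈ range (k + 1), c j ^ 2 / pi j * (v (lam j * ε) - ν * lam j ^ q * ε ^ q)) = X
      field_simp
      ring
    rw [hδeq]
    have hD : |(v ε - ν * ε ^ q) -
        ∑ j ∈ range (k + 1), c j ^ 2 / pi j * (v (lam j * ε) - ν * lam j ^ q * ε ^ q)|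
        ≤ C₂ * ε ^ (q + δ) := by
      calc |(v ε - ν * ε ^ q) -
          ∑ j ∈ range (k + 1), c j ^ 2 / pi j * (v (lam j * ε) - ν * lam j ^ q * ε ^ q)|
          ≤ |v ε - ν * ε ^ q| +
            |∑ j ∈ range (k + 1), c j ^ 2 / pi j * (v (lam j * ε) - ν * lam j ^ q * ε ^ q)| :=
            abs_sub _ _
        _ ≤ Lc * ε ^ (q + δ) + Csum * (Lc * lam k ^ (q + δ)) * ε ^ (q + δ) := by linarith
        _ = C₂ * ε ^ (q + δ) := by rw [hC₂def]; ring
    set A1' := b₁ ε ^ 2 - α ^ 2 * ε ^ 2 with hA1'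
    set A2' := b₂ ε ^ 2 with hA2'
    set D' := (v ε - ν * ε ^ q) -
        ∑ j ∈ range (k + 1), c j ^ 2 / pi j * (v (lam j * ε) - ν * lam j ^ q * ε ^ q) with hD'
    have hDdiv : |D'| / B ≤ C₂ * ε ^ (q + δ) / B := by gcongr
    calc |A1' - A2' + D' / B| ≤ |A1' - A2'| + |D' / B| := abs_add_le _ _
      _ ≤ |A1'| + |A2'| + |D'| / B := by
          rw [abs_div, abs_of_pos hB]
          linarith [abs_sub A1' A2']
      _ ≤ C₁ * ε ^ 3 + C₂ * ε ^ (q + δ) / B := by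
          rw [hC₁def]
          linarith [e1, e2, hDdiv]

  -- rescaled key estimate
  set M' := max M 1 with hM'def
  have hM'1 : (1:ℝ) ≤ M' := le_max_right _ _
  have hM'M : M ≤ M' := le_max_left _ _
  have hM'pos : (0:ℝ) < M' := lt_of_lt_of_le one_pos hM'1
  have hrq : 2 * r - 1 = r * q := by linear_combination hr2
  have key : ∀ η : ℝ, 0 < η → ∃ B₀ : ℝ, 1 ≤ B₀ ∧ ∀ B : ℝ, B₀ ≤ B →
      M * B ^ (-r) ≤ εs ∧
      ∀ ε : ℝ, m * B ^ (-r) ≤ ε → ε ≤ M * B ^ (-r) →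
        |B ^ (2 * r) * Δ ε B -
          (α ^ 2 * (ε * B ^ r) ^ 2 - K * (ε * B ^ r) ^ q)| ≤ η := by
    intro η hη
    set P := C₁ * M' ^ 3 + 1 with hPdef
    set Q := C₂ * M' ^ (q + δ) + 1 with hQdef
    have hPpos : 0 < P := by positivity
    have hQpos : 0 < Q := by
      have : (0:ℝ) ≤ C₂ * M' ^ (q + δ) := mul_nonneg hC₂nn (Real.rpow_pos_of_pos hM'pos _).le
      linarith
    have t1 : Filter.Tendsto (fun B : ℝ => B ^ (-r)) Filter.atTop (nhds 0) :=
      tendsto_rpow_neg_atTop hr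
    have t2 : Filter.Tendsto (fun B : ℝ => B ^ (-(r * δ))) Filter.atTop (nhds 0) :=
      tendsto_rpow_neg_atTop (by positivity)
    have ev1 : ∀ᶠ B : ℝ in Filter.atTop, B ^ (-r) < εs / M :=
      t1.eventually_lt_const (div_pos hεspos hMpos)
    have ev2 : ∀ᶠ B : ℝ in Filter.atTop, B ^ (-r) < η / 2 / P :=
      t1.eventually_lt_const (by positivity)
    have ev3 : ∀ᶠ B : ℝ in Filter.atTop, B ^ (-(r * δ)) < η / 2 / Q :=
      t2.eventually_lt_const (by positivity)
    obtain ⟨B₀, hB₀⟩ := Filter.eventually_atTop.mp ((ev1.and ev2).and ev3)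
    refine ⟨max B₀ 1, le_max_right _ _, ?_⟩
    intro B hB
    obtain ⟨⟨hev1, hev2⟩, hev3⟩ := hB₀ B (le_trans (le_max_left _ _) hB)
    have hB1 : (1:ℝ) ≤ B := le_trans (le_max_right _ _) hB
    have hBpos : (0:ℝ) < B := lt_of_lt_of_le one_pos hB1
    have hBr : (0:ℝ) < B ^ r := Real.rpow_pos_of_pos hBpos r
    have hBnr : (0:ℝ) < B ^ (-r) := Real.rpow_pos_of_pos hBpos _
    have hB2r : (0:ℝ) < B ^ (2 * r) := Real.rpow_pos_of_pos hBpos _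
    have hBnrδ : (0:ℝ) < B ^ (-(r * δ)) := Real.rpow_pos_of_pos hBpos _
    have hwin : M * B ^ (-r) ≤ εs := by
      calc M * B ^ (-r) ≤ M * (εs / M) := mul_le_mul_of_nonneg_left hev1.le hMpos.le
        _ = εs := by field_simp
    refine ⟨hwin, ?_⟩
    intro ε hεlo hεhi
    have hε : 0 < ε := lt_of_lt_of_le (mul_pos hm hBnr) hεlo
    have hεεs : ε ≤ εs := le_trans hεhi hwin
    have happ := approx ε hε hεεs B hBpos
    set t := ε * B ^ r with htdef
    have hcancel : B ^ (-r) * B ^ r = 1 := by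
      rw [← Real.rpow_add hBpos]; simp
    have htpos : 0 < t := mul_pos hε hBr
    have htM : t ≤ M := by
      calc t ≤ (M * B ^ (-r)) * B ^ r := mul_le_mul_of_nonneg_right hεhi hBr.le
        _ = M * (B ^ (-r) * B ^ r) := by ring
        _ = M := by rw [hcancel, mul_one]
    have htM' : t ≤ M' := htM.trans hM'M
    have hBr2 : (B ^ r) ^ (2:ℕ) = B ^ (r * 2) := by
      rw [← Real.rpow_natCast (B ^ r) 2, ← Real.rpow_mul hBpos.le]
      norm_num
    have hBr3 : (B ^ r) ^ (3:ℕ) = B ^ (r * 3) := by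
      rw [← Real.rpow_natCast (B ^ r) 3, ← Real.rpow_mul hBpos.le]
      norm_num
    have hid1 : B ^ (2 * r) * ε ^ 2 = t ^ 2 := by
      have h1 : t ^ 2 = ε ^ 2 * (B ^ r) ^ (2:ℕ) := by rw [htdef]; ring
      rw [h1, hBr2, show r * 2 = 2 * r by ring]
      ring
    have hid2 : B ^ (2 * r) * (ε ^ q / B) = t ^ q := by
      have h1 : t ^ q = ε ^ q * B ^ (r * q) := by
        rw [htdef, Real.mul_rpow hε.le hBr.le, ← Real.rpow_mul hBpos.le]
      rw [h1, ← hrq, Real.rpow_sub hBpos, Real.rpow_one]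
      ring
    have hid3 : B ^ (2 * r) * ε ^ 3 = t ^ 3 * B ^ (-r) := by
      have h1 : t ^ 3 * B ^ (-r) = ε ^ 3 * ((B ^ r) ^ (3:ℕ) * B ^ (-r)) := by
        rw [htdef]; ring
      rw [h1, hBr3, ← Real.rpow_add hBpos, show r * 3 + -r = 2 * r by ring]
      ring
    have hid4 : B ^ (2 * r) * (ε ^ (q + δ) / B) = t ^ (q + δ) * B ^ (-(r * δ)) := by
      have h1 : t ^ (q + δ) * B ^ (-(r * δ)) = ε ^ (q + δ) * (B ^ (r * (q + δ)) * B ^ (-(r * δ))) := by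
        rw [htdef, Real.mul_rpow hε.le hBr.le, ← Real.rpow_mul hBpos.le]
        ring
      rw [h1, ← Real.rpow_add hBpos,
        show r * (q + δ) + -(r * δ) = 2 * r - 1 by linear_combination -hr2,
        Real.rpow_sub hBpos, Real.rpow_one]
      ring
    have hmain : B ^ (2 * r) * Δ ε B - (α ^ 2 * t ^ 2 - K * t ^ q)
        = B ^ (2 * r) * (Δ ε B - (α ^ 2 * ε ^ 2 - K * ε ^ q / B)) := by
      have h1 : B ^ (2 * r) * (α ^ 2 * ε ^ 2) = α ^ 2 * t ^ 2 := by
        rw [show B ^ (2 * r) * (α ^ 2 * ε ^ 2) = α ^ 2 * (B ^ (2 * r) * ε ^ 2) by ring, hid1]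
      have h2 : B ^ (2 * r) * (K * ε ^ q / B) = K * t ^ q := by
        rw [show B ^ (2 * r) * (K * ε ^ q / B) = K * (B ^ (2 * r) * (ε ^ q / B)) by ring, hid2]
      rw [mul_sub, mul_sub, h1, h2]
    have hb1 : C₁ * t ^ 3 ≤ P := by
      have h1 : t ^ 3 ≤ M' ^ 3 := pow_le_pow_left₀ htpos.le htM' 3
      have h2 : C₁ * t ^ 3 ≤ C₁ * M' ^ 3 := mul_le_mul_of_nonneg_left h1 hC₁nn
      rw [hPdef]; linarith
    have hb2 : C₂ * t ^ (q + δ) ≤ Q := by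
      have h1 : t ^ (q + δ) ≤ M' ^ (q + δ) :=
        Real.rpow_le_rpow htpos.le htM' (by linarith)
      have h2 : C₂ * t ^ (q + δ) ≤ C₂ * M' ^ (q + δ) := mul_le_mul_of_nonneg_left h1 hC₂nn
      rw [hQdef]; linarith
    have hnn1 : (0:ℝ) ≤ C₁ * t ^ 3 := mul_nonneg hC₁nn (pow_nonneg htpos.le 3)
    have hnn2 : (0:ℝ) ≤ C₂ * t ^ (q + δ) :=
      mul_nonneg hC₂nn (Real.rpow_pos_of_pos htpos _).le
    calc |B ^ (2 * r) * Δ ε B - (α ^ 2 * t ^ 2 - K * t ^ q)|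
        = B ^ (2 * r) * |Δ ε B - (α ^ 2 * ε ^ 2 - K * ε ^ q / B)| := by
          rw [hmain, abs_mul, abs_of_pos hB2r]
      _ ≤ B ^ (2 * r) * (C₁ * ε ^ 3 + C₂ * ε ^ (q + δ) / B) :=
          mul_le_mul_of_nonneg_left happ hB2r.le
      _ = C₁ * t ^ 3 * B ^ (-r) + C₂ * t ^ (q + δ) * B ^ (-(r * δ)) := by
          rw [show B ^ (2 * r) * (C₁ * ε ^ 3 + C₂ * ε ^ (q + δ) / B)
              = C₁ * (B ^ (2 * r) * ε ^ 3) + C₂ * (B ^ (2 * r) * (ε ^ (q + δ) / B)) by ring,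
            hid3, hid4]
          ring
      _ ≤ P * (η / 2 / P) + Q * (η / 2 / Q) := by
          have g1 : C₁ * t ^ 3 * B ^ (-r) ≤ P * (η / 2 / P) :=
            mul_le_mul hb1 hev2.le hBnr.le hPpos.le
          have g2 : C₂ * t ^ (q + δ) * B ^ (-(r * δ)) ≤ Q * (η / 2 / Q) :=
            mul_le_mul hb2 hev3.le hBnrδ.le hQpos.le
          linarith
      _ = η := by
          rw [mul_comm P, mul_comm Q, div_mul_cancel₀ _ hPpos.ne', div_mul_cancel₀ _ hQpos.ne']
          ring
  have hmM : m < M := hmC.trans hCM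
  constructor
  · -- (i) existence of a zero via IVT
    have hgm := hgneg m hm hmC
    have hgM := hgpos M hMpos hCM
    set η₁ := min (-(α ^ 2 * m ^ 2 - K * m ^ q)) (α ^ 2 * M ^ 2 - K * M ^ q) / 2 with hη₁def
    have hη₁pos : 0 < η₁ := by
      rw [hη₁def]
      exact half_pos (lt_min (by linarith) (by linarith))
    have hη₁m : η₁ ≤ -(α ^ 2 * m ^ 2 - K * m ^ q) / 2 := by
      rw [hη₁def]
      have := min_le_left (-(α ^ 2 * m ^ 2 - K * m ^ q)) (α ^ 2 * M ^ 2 - K * M ^ q)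
      linarith
    have hη₁M : η₁ ≤ (α ^ 2 * M ^ 2 - K * M ^ q) / 2 := by
      rw [hη₁def]
      have := min_le_right (-(α ^ 2 * m ^ 2 - K * m ^ q)) (α ^ 2 * M ^ 2 - K * M ^ q)
      linarith
    obtain ⟨B₀, hB₀1, hkey⟩ := key η₁ hη₁pos
    refine ⟨B₀, lt_of_lt_of_le one_pos hB₀1, ?_⟩
    intro B hB
    obtain ⟨hwin, hest⟩ := hkey B hB
    have hBpos : (0:ℝ) < B := lt_of_lt_of_le one_pos (hB₀1.trans hB)
    have hBnr : (0:ℝ) < B ^ (-r) := Real.rpow_pos_of_pos hBpos _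
    have hBr : (0:ℝ) < B ^ r := Real.rpow_pos_of_pos hBpos _
    have hB2r : (0:ℝ) < B ^ (2 * r) := Real.rpow_pos_of_pos hBpos _
    have hcancel : B ^ (-r) * B ^ r = 1 := by
      rw [← Real.rpow_add hBpos]; simp
    have hab' : m * B ^ (-r) ≤ M * B ^ (-r) :=
      mul_le_mul_of_nonneg_right hmM.le hBnr.le
    have hapos : 0 < m * B ^ (-r) := mul_pos hm hBnr
    have hta : m * B ^ (-r) * B ^ r = m := by rw [mul_assoc, hcancel, mul_one]
    have htb : M * B ^ (-r) * B ^ r = M := by rw [mul_assoc, hcancel, mul_one]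
    have hFa : Δ (m * B ^ (-r)) B < 0 := by
      have h := hest (m * B ^ (-r)) le_rfl hab'
      rw [hta] at h
      have h3 := (abs_le.mp h).2
      have hneg : B ^ (2 * r) * Δ (m * B ^ (-r)) B < 0 := by linarith
      by_contra hge
      push_neg at hge
      exact absurd hneg (not_lt.mpr (mul_nonneg hB2r.le hge))
    have hFb : 0 < Δ (M * B ^ (-r)) B := by
      have h := hest (M * B ^ (-r)) hab' le_rfl
      rw [htb] at h
      have h3 := (abs_le.mp h).1
      have hpos' : 0 < B ^ (2 * r) * Δ (M * B ^ (-r)) B := by linarith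
      by_contra hge
      push_neg at hge
      exact absurd hpos' (not_lt.mpr (mul_nonpos_iff.mpr (Or.inl ⟨hB2r.le, hge⟩)))
    have hsub : Set.Icc (m * B ^ (-r)) (M * B ^ (-r)) ⊆ Set.Ioc 0 ε₀ := by
      intro x hx
      exact ⟨lt_of_lt_of_le hapos hx.1, le_trans hx.2 (hwin.trans hεsε₀')⟩
    have hcont : ContinuousOn (fun x => Δ x B) (Set.Icc (m * B ^ (-r)) (M * B ^ (-r))) := by
      have heq : Set.EqOn (fun x => Δ x B)
          (fun x => (b₁ x ^ 2 + v x / B) -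
            (b₂ x ^ 2 + (1 / B) * ∑ j ∈ range (k + 1), c j ^ 2 / pi j * v (lam j * x)))
          (Set.Icc (m * B ^ (-r)) (M * B ^ (-r))) := fun x _ => hΔ x B
      apply ContinuousOn.congr ?_ heq
      apply ContinuousOn.sub
      · exact ((hb₁cont.mono hsub).pow 2).add ((hvcont.mono hsub).div_const B)
      · refine ((hb₂cont.mono hsub).pow 2).add (continuousOn_const.mul ?_)
        apply continuousOn_finset_sum
        intro j hj
        apply continuousOn_const.mul
        have hjk := hmem j hj
        refine ContinuousOn.comp hvcont
          ((continuous_const.mul continuous_id).continuousOn) ?_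
        intro x hx
        refine ⟨mul_pos (hlampos j hjk) (lt_of_lt_of_le hapos hx.1), ?_⟩
        calc lam j * x ≤ lam k * (M * B ^ (-r)) :=
              mul_le_mul (hlamk j hjk) hx.2 (le_trans hapos.le hx.1) hlamkpos.le
          _ ≤ lam k * εs := mul_le_mul_of_nonneg_left hwin hlamkpos.le
          _ ≤ ε₀ := hεs_ε₀
    have hivt := intermediate_value_Icc hab' hcont
    have h0mem : (0:ℝ) ∈ Set.Icc (Δ (m * B ^ (-r)) B) (Δ (M * B ^ (-r)) B) := ⟨hFa.le, hFb.le⟩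
    obtain ⟨ε, hεmem, hε0⟩ := hivt h0mem
    exact ⟨ε, hεmem, hε0⟩
  · -- (ii) localization of zeros
    intro η' hη'
    set T := Set.Icc m M ∩ (Set.Iic (C - η') ∪ Set.Ici (C + η')) with hTdef
    have habs2 : ∀ t : ℝ, m ≤ t → t ≤ M → t ∉ T → |t - C| ≤ η' := by
      intro t h1 h2 h3
      refine abs_le.mpr ⟨?_, ?_⟩
      · by_contra hcon
        push_neg at hcon
        exact h3 ⟨⟨h1, h2⟩, Or.inl (by simp only [Set.mem_Iic]; linarith)⟩
      · by_contra hcon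
        push_neg at hcon
        exact h3 ⟨⟨h1, h2⟩, Or.inr (by simp only [Set.mem_Ici]; linarith)⟩
    have hwinmem : ∀ B : ℝ, 1 ≤ B →
        ∀ ε ∈ Set.Icc (m * B ^ (-r)) (M * B ^ (-r)), m ≤ ε * B ^ r ∧ ε * B ^ r ≤ M := by
      intro B hB1 ε hεmem
      have hBpos : (0:ℝ) < B := lt_of_lt_of_le one_pos hB1
      have hBr : (0:ℝ) < B ^ r := Real.rpow_pos_of_pos hBpos _
      have hcancel : B ^ (-r) * B ^ r = 1 := by
        rw [← Real.rpow_add hBpos]; simp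
      constructor
      · calc m = m * B ^ (-r) * B ^ r := by rw [mul_assoc, hcancel, mul_one]
          _ ≤ ε * B ^ r := mul_le_mul_of_nonneg_right hεmem.1 hBr.le
      · calc ε * B ^ r ≤ M * B ^ (-r) * B ^ r := mul_le_mul_of_nonneg_right hεmem.2 hBr.le
          _ = M := by rw [mul_assoc, hcancel, mul_one]
    by_cases hTne : T.Nonempty
    · have hTcomp : IsCompact T :=
        isCompact_Icc.inter_right (isClosed_Iic.union isClosed_Ici)
      have hgcont : ContinuousOn (fun t : ℝ => |α ^ 2 * t ^ 2 - K * t ^ q|) T := by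
        apply ContinuousOn.abs
        apply ContinuousOn.sub
        · exact (continuous_const.mul (continuous_pow 2)).continuousOn
        · apply continuousOn_const.mul
          refine ContinuousOn.rpow_const continuousOn_id ?_
          intro x hx
          exact Or.inl (ne_of_gt (lt_of_lt_of_le hm hx.1.1))
      obtain ⟨t₀, ht₀T, hmin⟩ := hTcomp.exists_isMinOn hTne hgcont
      set μ := |α ^ 2 * t₀ ^ 2 - K * t₀ ^ q| with hμdef
      have ht₀pos : 0 < t₀ := lt_of_lt_of_le hm ht₀T.1.1
      have ht₀ne : t₀ ≠ C := by
        rcases ht₀T.2 with h | h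
        · exact ne_of_lt (lt_of_le_of_lt h (by linarith))
        · exact ne_of_gt (lt_of_lt_of_le (by linarith) h)
      have hμpos : 0 < μ := by
        rw [hμdef, abs_pos]
        rcases lt_or_gt_of_ne ht₀ne with h | h
        · exact ne_of_lt (hgneg t₀ ht₀pos h)
        · exact ne_of_gt (hgpos t₀ ht₀pos h)
      obtain ⟨B₀, hB₀1, hkey⟩ := key (μ / 2) (half_pos hμpos)
      refine ⟨B₀, lt_of_lt_of_le one_pos hB₀1, ?_⟩
      intro B hB ε hεmem hzero
      obtain ⟨hwin, hest⟩ := hkey B hB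
      have hB1 : (1:ℝ) ≤ B := hB₀1.trans hB
      have h := hest ε hεmem.1 hεmem.2
      rw [hzero, mul_zero, zero_sub, abs_neg] at h
      obtain ⟨htm, htM⟩ := hwinmem B hB1 ε hεmem
      have hnotT : ε * B ^ r ∉ T := by
        intro hmemT
        have hge := isMinOn_iff.mp hmin _ hmemT
        linarith
      exact habs2 _ htm htM hnotT
    · refine ⟨1, one_pos, ?_⟩
      intro B hB ε hεmem hzero
      obtain ⟨htm, htM⟩ := hwinmem B hB ε hεmem
      have hnotT : ε * B ^ r ∉ T := by
        rw [Set.not_nonempty_iff_eq_empty] at hTne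
        rw [hTne]
        exact Set.notMem_empty _
      exact habs2 _ htm htM hnotT
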